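/- arXiv:1705.06443 — 5 statements merged into one kernel-verified Lean document; each statement's English description precedes it below -/
import Mathlib

section
/- Let E and F be Banach spaces and L : E → F a continuous linear map. Then the image of L is closed in F if and only if there exists a constant c > 0 such that for every y in the image of L there exists x ∈ E with L x = y and ‖y‖ ≥ c ‖x‖. -/
theorem stmt0 {E F : Type*} [NormedAddCommGroup E] [NormedSpace ℝ E] [CompleteSpace E]
    [NormedAddCommGroup F] [NormedSpace ℝ F] [CompleteSpace F] (L : E →L[ℝ] F) :
    IsClosed (Set.range L) ↔
      ∃ c : ℝ, 0 < c ∧ ∀ y ∈ Set.range L, ∃ x : E, L x = y ∧ c * ‖x‖ ≤ ‖y‖ := by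
  constructor
  · intro hclosed
    have hS : IsClosed (LinearMap.range (L : E →ₗ[ℝ] F) : Set F) := by
      rwa [LinearMap.coe_range]
    haveI : CompleteSpace (LinearMap.range (L : E →ₗ[ℝ] F)) := hS.completeSpace_coe
    set L' : E →L[ℝ] (LinearMap.range (L : E →ₗ[ℝ] F)) :=
      L.codRestrict (LinearMap.range (L : E →ₗ[ℝ] F)) (fun x => LinearMap.mem_range_self _ x) with hL'
    have hsurj : Function.Surjective L' := by
      rintro ⟨y, x, hx⟩
      exact ⟨x, Subtype.ext hx⟩
    obtain ⟨C, C0, hC⟩ := ContinuousLinearMap.exists_preimage_norm_le L' hsurj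
    refine ⟨C⁻¹, inv_pos.2 C0, ?_⟩
    rintro y ⟨x₀, hx₀⟩
    have hy : y ∈ LinearMap.range (L : E →ₗ[ℝ] F) := ⟨x₀, hx₀⟩
    obtain ⟨x, hx, hxle⟩ := hC ⟨y, hy⟩
    refine ⟨x, congrArg Subtype.val hx, ?_⟩
    have : ‖x‖ ≤ C * ‖y‖ := hxle
    rwa [inv_mul_le_iff₀ C0]
  · rintro ⟨c, hc, h⟩
    set S : AddSubgroup E := (LinearMap.ker (L : E →ₗ[ℝ] F)).toAddSubgroup with hSdef
    set f : NormedAddGroupHom E F :=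
      { toFun := L, map_add' := map_add L, bound' := ⟨‖L‖, fun x => L.le_opNorm x⟩ } with hfdef
    have hf : ∀ s ∈ S, f s = 0 := fun s hs => hs
    set g := NormedAddGroupHom.lift S f hf with hgdef
    have hanti : AntilipschitzWith ⟨c⁻¹, le_of_lt (inv_pos.2 hc)⟩ g := by
      apply AddMonoidHomClass.antilipschitz_of_bound
      intro q
      induction q using Quotient.ind with
      | _ x =>
        have hx : g (QuotientAddGroup.mk' S x) = L x := rfl
        obtain ⟨x', hx', hle⟩ := h (L x) ⟨x, rfl⟩
        have hmk : (QuotientAddGroup.mk' S x : E ⧸ S) = QuotientAddGroup.mk' S x' := by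
          rw [QuotientAddGroup.mk'_eq_mk']
          refine ⟨x' - x, ?_, by abel⟩
          show x' - x ∈ LinearMap.ker (L : E →ₗ[ℝ] F)
          rw [LinearMap.mem_ker, map_sub, ContinuousLinearMap.coe_coe, hx']
          simp
        show ‖(QuotientAddGroup.mk' S x : E ⧸ S)‖ ≤ _
        rw [hmk, show (g ⟦x⟧ : F) = L x from rfl]
        calc ‖(QuotientAddGroup.mk' S x' : E ⧸ S)‖ ≤ ‖x'‖ := QuotientAddGroup.norm_mk_le_norm
          _ ≤ c⁻¹ * ‖L x‖ := by
            rw [← hx'] at hle ⊢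
            rw [le_inv_mul_iff₀ hc]
            exact hle
          _ = (⟨c⁻¹, le_of_lt (inv_pos.2 hc)⟩ : NNReal) * ‖L x‖ := rfl
    have hrange : Set.range (⇑L) = Set.range (⇑g) := by
      have hsurj : Function.Surjective (QuotientAddGroup.mk' S) :=
        QuotientAddGroup.mk'_surjective S
      rw [← hsurj.range_comp (g := ⇑g)]
      rfl
    rw [hrange]
    exact hanti.isClosed_range g.uniformContinuous
end

section
/- Let Y be a real Banach space, (π_h) a sequence in Y*, (ρ_h) a sequence of nonnegative reals with ρ_h → 0, and suppose π_h → 0 in the weak-star topology. Let K be a nonempty closed convex subset of Y with nonempty relative interior, let a ∈ K, and set S := closure(aff(K)) − a (a closed subspace of Y). If for every y ∈ K there exists c_y ∈ ℝ such that π_h(y) ≤ c_y ρ_h for all h, then the restrictions of π_h to S converge to 0 in the operator norm of S*. -/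
open Filter

set_option maxHeartbeats 1000000 in
set_option synthInstance.maxHeartbeats 400000 in
theorem stmt1 {Y : Type*} [NormedAddCommGroup Y] [NormedSpace ℝ Y] [CompleteSpace Y]
    (π : ℕ → (Y →L[ℝ] ℝ)) (ρ : ℕ → ℝ) (K : Set Y) (a : Y)
    (hK : K.Nonempty) (hKc : IsClosed K) (hKconv : Convex ℝ K)
    -- nonempty relative interior: some point of K is interior to K
    -- within the closed affine hull of K
    (hri : ∃ x ∈ K, ∃ ε : ℝ, 0 < ε ∧
      ∀ y ∈ closure (affineSpan ℝ K : Set Y), ‖y - x‖ < ε → y ∈ K)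
    (ha : a ∈ K)
    (S : Submodule ℝ Y)
    (hS : S = (Submodule.span ℝ ((fun y => y - a) '' K)).topologicalClosure)
    (hρ0 : ∀ h, 0 ≤ ρ h)
    (hρ : Tendsto ρ atTop (nhds 0))
    (hw : ∀ y : Y, Tendsto (fun h => π h y) atTop (nhds (0 : ℝ)))
    (hdom : ∀ y ∈ K, ∃ c : ℝ, ∀ h : ℕ, π h y ≤ c * ρ h) :
    Tendsto (fun h => ‖(π h).comp (S.subtypeL)‖) atTop (nhds 0) := by
  obtain ⟨x₀, hx₀K, ε, hε, hri⟩ := hri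
  -- membership of K - a in S
  have hKA : ∀ y ∈ K, y - a ∈ S := by
    intro y hy
    rw [hS]
    exact Submodule.le_topologicalClosure _ (Submodule.subset_span ⟨y, hy, rfl⟩)
  -- S-translates of a lie in the closed affine hull
  have hAsub : ∀ y : Y, y - a ∈ S → y ∈ closure (affineSpan ℝ K : Set Y) := by
    intro y hy
    rw [hS] at hy
    have hy' : y - a ∈ closure ((Submodule.span ℝ ((fun y => y - a) '' K) : Submodule ℝ Y) : Set Y) := hy
    have hmap : ∀ v ∈ ((Submodule.span ℝ ((fun y => y - a) '' K) : Submodule ℝ Y) : Set Y),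
        a + v ∈ (affineSpan ℝ K : Set Y) := by
      intro v hv
      have hdir : v ∈ (affineSpan ℝ K).direction := by
        rw [direction_affineSpan, vectorSpan_eq_span_vsub_set_right ℝ ha]
        simpa [vsub_eq_sub] using hv
      have := AffineSubspace.vadd_mem_of_mem_direction hdir (mem_affineSpan ℝ ha)
      simpa [vadd_eq_add, add_comm] using this
    have := map_mem_closure (continuous_const.add continuous_id) hy' hmap
    simpa using this
  have hScl : IsClosed (S : Set Y) := by
    rw [hS]; exact Submodule.isClosed_topologicalClosure _
  -- the Baire space B
  set B : Set Y := ((fun y => y - a) ⁻¹' (S : Set Y)) ∩ Metric.closedBall x₀ (ε/2) with hB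
  have hBclosed : IsClosed B :=
    (hScl.preimage (continuous_id.sub continuous_const)).inter Metric.isClosed_closedBall
  have hBK : B ⊆ K := by
    rintro y ⟨hy1, hy2⟩
    refine hri y (hAsub y hy1) ?_
    have : dist y x₀ ≤ ε/2 := hy2
    rw [dist_eq_norm] at this
    linarith
  have hx₀B : x₀ ∈ B := by
    refine ⟨hKA x₀ hx₀K, ?_⟩
    simp [Metric.mem_closedBall]
    positivity
  haveI : CompleteSpace B := hBclosed.completeSpace_coe
  haveI : Nonempty B := ⟨⟨x₀, hx₀B⟩⟩
  -- Baire category argument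
  set F : ℕ → Set B := fun n => {y : B | ∀ h, π h (y : Y) ≤ (n : ℝ) * ρ h} with hF
  have hFc : ∀ n, IsClosed (F n) := by
    intro n
    have : F n = ⋂ h, {y : B | π h (y : Y) ≤ (n : ℝ) * ρ h} := by
      ext y; simp [hF]
    rw [this]
    exact isClosed_iInter fun h =>
      isClosed_le ((π h).continuous.comp continuous_subtype_val) continuous_const
  have hFU : ⋃ n, F n = Set.univ := by
    rw [Set.eq_univ_iff_forall]
    intro y
    obtain ⟨c, hc⟩ := hdom (y : Y) (hBK y.2)
    refine Set.mem_iUnion.mpr ⟨⌈max c 0⌉₊, fun h => ?_⟩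
    calc π h (y : Y) ≤ c * ρ h := hc h
      _ ≤ (⌈max c 0⌉₊ : ℝ) * ρ h := by
          apply mul_le_mul_of_nonneg_right _ (hρ0 h)
          exact le_trans (le_max_left c 0) (Nat.le_ceil _)
  obtain ⟨n, hne⟩ := nonempty_interior_of_iUnion_of_closed hFc hFU
  obtain ⟨y₀', hy₀'⟩ := hne
  obtain ⟨δ, hδpos, hδ⟩ := Metric.mem_nhds_iff.mp (mem_interior_iff_mem_nhds.mp hy₀')
  set y₀ : Y := (y₀' : Y) with hy₀def
  have hy₀S : y₀ - a ∈ S := y₀'.2.1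
  have hy₀x₀ : ‖y₀ - x₀‖ ≤ ε/2 := by
    have := y₀'.2.2
    rwa [Metric.mem_closedBall, dist_eq_norm] at this
  -- uniform bound on a relative ball
  have hkey0 : ∀ w : Y, w - a ∈ S → ‖w - x₀‖ ≤ ε/2 → ‖w - y₀‖ < δ →
      ∀ h, π h w ≤ (n : ℝ) * ρ h := by
    intro w hwS hwx hwy h
    have hwB : w ∈ B := ⟨hwS, by rwa [Metric.mem_closedBall, dist_eq_norm]⟩
    have : (⟨w, hwB⟩ : B) ∈ Metric.ball y₀' δ := by
      rw [Metric.mem_ball, Subtype.dist_eq, dist_eq_norm]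
      exact hwy
    exact hδ this h
  -- move the center inward
  set δ' := min δ (ε/2) with hδ'
  have hδ'pos : 0 < δ' := lt_min hδpos (by positivity)
  have hδ'δ : δ' ≤ δ := min_le_left _ _
  have hδ'ε : δ' ≤ ε/2 := min_le_right _ _
  set t : ℝ := δ' / ε with ht
  have htpos : 0 < t := by positivity
  have ht1 : t ≤ 1 := by
    rw [ht, div_le_one hε]; linarith
  set y₁ : Y := y₀ + t • (x₀ - y₀) with hy₁
  set r : ℝ := δ' / 2 with hr
  have hrpos : 0 < r := by positivity
  have hy₁S : y₁ - a ∈ S := by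
    have h1 : y₁ - a = (y₀ - a) + t • ((x₀ - a) - (y₀ - a)) := by
      rw [hy₁]; module
    rw [h1]
    exact S.add_mem hy₀S (S.smul_mem t (S.sub_mem (hKA x₀ hx₀K) hy₀S))
  have hkey : ∀ v : Y, v ∈ S → ‖v‖ < r → ∀ h, π h (y₁ + v) ≤ (n : ℝ) * ρ h := by
    intro v hvS hvr h
    have hts : t * (ε/2) = δ'/2 := by
      rw [ht]; field_simp
    apply hkey0 (y₁ + v)
    · have h1 : y₁ + v - a = (y₁ - a) + v := by abel
      rw [h1]; exact S.add_mem hy₁S hvS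
    · have h2 : y₁ + v - x₀ = v + (1 - t) • (y₀ - x₀) := by
        rw [hy₁]; module
      rw [h2]
      calc ‖v + (1 - t) • (y₀ - x₀)‖ ≤ ‖v‖ + ‖(1 - t) • (y₀ - x₀)‖ := norm_add_le _ _
        _ ≤ ‖v‖ + (1 - t) * (ε/2) := by
            rw [norm_smul, Real.norm_eq_abs, abs_of_nonneg (by linarith)]
            have := mul_le_mul_of_nonneg_left hy₀x₀ (by linarith : (0:ℝ) ≤ 1 - t)
            linarith
        _ ≤ ε/2 := by nlinarith
    · have h3 : y₁ + v - y₀ = v + t • (x₀ - y₀) := by rw [hy₁]; abel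
      rw [h3]
      calc ‖v + t • (x₀ - y₀)‖ ≤ ‖v‖ + ‖t • (x₀ - y₀)‖ := norm_add_le _ _
        _ ≤ ‖v‖ + t * (ε/2) := by
            rw [norm_smul, Real.norm_eq_abs, abs_of_pos htpos, norm_sub_rev]
            have := mul_le_mul_of_nonneg_left hy₀x₀ (le_of_lt htpos)
            linarith
        _ < δ := by rw [hts] at *; rw [hr] at hvr; linarith
  -- the majorant
  set M : ℕ → ℝ := fun h => (2 / r) * ((n : ℝ) * ρ h + |π h y₁|) with hM
  have hMnn : ∀ h, 0 ≤ M h := by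
    intro h
    exact mul_nonneg (by positivity)
      (add_nonneg (mul_nonneg (Nat.cast_nonneg n) (hρ0 h)) (abs_nonneg _))
  have hbound : ∀ h, ‖(π h).comp (S.subtypeL)‖ ≤ M h := by
    intro h
    apply ContinuousLinearMap.opNorm_le_bound _ (hMnn h)
    intro s
    have hval : ((π h).comp (S.subtypeL)) s = π h (s : Y) := rfl
    have hnrm : ‖s‖ = ‖(s : Y)‖ := rfl
    rcases eq_or_ne (s : Y) 0 with h0 | h0
    · have : s = 0 := by exact_mod_cast Submodule.coe_eq_zero.mp h0
      simp [this, hval]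
    · set ns : ℝ := ‖(s : Y)‖ with hns
      have hnspos : 0 < ns := norm_pos_iff.mpr h0
      set c : ℝ := r / (2 * ns) with hcdef
      have hcpos : 0 < c := by positivity
      set u : Y := c • (s : Y) with hu
      have huS : u ∈ S := S.smul_mem c s.2
      have hunorm : ‖u‖ = r / 2 := by
        rw [hu, norm_smul, Real.norm_eq_abs, abs_of_pos hcpos, hcdef, ← hns]
        field_simp
      have hur : ‖u‖ < r := by rw [hunorm]; linarith
      have hp := hkey u huS hur h
      have hm := hkey (-u) (S.neg_mem huS) (by rwa [norm_neg]) h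
      rw [map_add] at hp
      rw [map_add, map_neg] at hm
      set D : ℝ := (n : ℝ) * ρ h + |π h y₁| with hD
      have haby : -|π h y₁| ≤ π h y₁ := neg_abs_le _
      have habs : |π h u| ≤ D := by
        rw [abs_le]
        constructor <;> [linarith; linarith]
      have hπu : π h u = c * π h (s : Y) := by
        rw [hu, map_smul]; rfl
      have habs2 : c * |π h (s : Y)| ≤ D := by
        rw [← abs_of_pos hcpos, ← abs_mul, ← hπu]; exact habs
      have hfin : |π h (s : Y)| ≤ M h * ns := by
        have hMns : M h * ns = D / c := by
          rw [hM, hcdef]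
          field_simp
          ring
        rw [hMns, le_div_iff₀ hcpos, mul_comm]
        exact habs2
      rw [hval, hnrm, Real.norm_eq_abs]
      exact hfin
  have hMlim : Tendsto M atTop (nhds 0) := by
    have h1 : Tendsto (fun h => (n : ℝ) * ρ h + |π h y₁|) atTop (nhds ((n : ℝ) * 0 + |(0:ℝ)|)) :=
      (hρ.const_mul (n : ℝ)).add ((hw y₁).abs)
    have h2 := h1.const_mul (2 / r)
    simpa using h2
  exact squeeze_zero (fun h => ContinuousLinearMap.opNorm_nonneg _) hbound hMlim
end

section
/- Let X and U be normed spaces, h ≥ 1, and for 0 ≤ t ≤ h let A_t : X → X and B_t : U → X be bounded linear operators (A_0 unused). Define G : X^h × U^{h+1} → X^{h+1} by G((y_1,…,y_h),(v_0,…,v_h)) = (−y_1 + B_0 v_0, (−y_{t+1} + A_t y_t + B_t v_t)_{1≤t≤h−1}, A_h y_h + B_h v_h). If the subspace Im(A_h ∘ B_{h−1}) + Im B_h is closed in X and equals Im A_h + Im B_h, and Im A_h + Im B_h is closed, then Im G is closed in X^{h+1}. -/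
open Fin.NatCast in
noncomputable def Yaux {X : Type*} [NormedAddCommGroup X] [NormedSpace ℝ X] (h : ℕ)
    (A : ℕ → (X →L[ℝ] X)) : ℕ → (Fin (h + 1) → X) → X
  | 0, _ => 0
  | (t + 1), w => A t (Yaux h A t w) - w t

lemma Yaux_cont {X : Type*} [NormedAddCommGroup X] [NormedSpace ℝ X] (h : ℕ)
    (A : ℕ → (X →L[ℝ] X)) (t : ℕ) : Continuous (Yaux h A t) := by
  induction t with
  | zero => exact continuous_const
  | succ t ih => exact (((A t).continuous).comp ih).sub (continuous_apply _)

open Fin.NatCast in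
theorem stmt3 {X U : Type*} [NormedAddCommGroup X] [NormedSpace ℝ X]
    [NormedAddCommGroup U] [NormedSpace ℝ U]
    (h : ℕ) (hh : 1 ≤ h) (A : ℕ → (X →L[ℝ] X)) (B : ℕ → (U →L[ℝ] X))
    (G : ((ℕ → X) × (ℕ → U)) → (Fin (h + 1) → X))
    (hG : ∀ y : ℕ → X, ∀ v : ℕ → U, ∀ t : Fin (h + 1),
      G (y, v) t =
        if (t : ℕ) = 0 then -(y 1) + B 0 (v 0)
        else if (t : ℕ) = h then A h (y h) + B h (v h)
        else -(y ((t : ℕ) + 1)) + A t (y t) + B t (v t))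
    (hclosed1 : IsClosed ((LinearMap.range (((((A h).comp (B (h - 1))) : U →L[ℝ] X)) : U →ₗ[ℝ] X) ⊔
        LinearMap.range ((B h : U →L[ℝ] X) : U →ₗ[ℝ] X) : Submodule ℝ X) : Set X))
    (heq : (LinearMap.range (((((A h).comp (B (h - 1))) : U →L[ℝ] X)) : U →ₗ[ℝ] X) ⊔
        LinearMap.range ((B h : U →L[ℝ] X) : U →ₗ[ℝ] X) : Submodule ℝ X)
      = (LinearMap.range ((A h : X →L[ℝ] X) : X →ₗ[ℝ] X) ⊔ LinearMap.range ((B h : U →L[ℝ] X) : U →ₗ[ℝ] X)))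
    (hclosed2 : IsClosed ((LinearMap.range ((A h : X →L[ℝ] X) : X →ₗ[ℝ] X) ⊔
        LinearMap.range ((B h : U →L[ℝ] X) : U →ₗ[ℝ] X) : Submodule ℝ X) : Set X)) :
    IsClosed (Set.range G) := by
  classical
  have h0 : h ≠ 0 := Nat.one_le_iff_ne_zero.mp hh
  have hlt : h < h + 1 := Nat.lt_succ_self h
  set S : Submodule ℝ X :=
    LinearMap.range ((A h : X →L[ℝ] X) : X →ₗ[ℝ] X) ⊔ LinearMap.range ((B h : U →L[ℝ] X) : U →ₗ[ℝ] X) with hS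
  have hkey : Set.range G =
      (fun w : Fin (h + 1) → X => w ⟨h, hlt⟩ - A h (Yaux h A h w)) ⁻¹' (S : Set X) := by
    ext w
    constructor
    · rintro ⟨⟨y, v⟩, rfl⟩
      have hval : G (y, v) ⟨h, hlt⟩ = A h (y h) + B h (v h) := by
        rw [hG]; simp [h0]
      simp only [Set.mem_preimage, hval, SetLike.mem_coe]
      have hrw : A h (y h) + B h (v h) - A h (Yaux h A h (G (y, v)))
          = A h (y h - Yaux h A h (G (y, v))) + B h (v h) := by
        rw [map_sub]; abel
      rw [hrw]
      exact S.add_mem (Submodule.mem_sup_left ⟨_, rfl⟩) (Submodule.mem_sup_right ⟨_, rfl⟩)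
    · intro hw
      have hw' : w ⟨h, hlt⟩ - A h (Yaux h A h w) ∈
          (LinearMap.range (((((A h).comp (B (h - 1))) : U →L[ℝ] X)) : U →ₗ[ℝ] X) ⊔
            LinearMap.range ((B h : U →L[ℝ] X) : U →ₗ[ℝ] X) : Submodule ℝ X) := by
        rw [heq]; exact hw
      obtain ⟨a, ha, b, hb, hab⟩ := Submodule.mem_sup.mp hw'
      obtain ⟨u', rfl⟩ := ha
      obtain ⟨u, rfl⟩ := hb
      simp only [ContinuousLinearMap.coe_coe, ContinuousLinearMap.comp_apply] at hab
      refine ⟨(fun t => if t = h then Yaux h A h w + B (h - 1) u' else Yaux h A t w,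
        fun t => if t = h then u else if t = h - 1 then u' else 0), ?_⟩
      funext t
      rw [hG]
      have hc : (((t : ℕ) : ℕ) : Fin (h + 1)) = t := Fin.cast_val_eq_self t
      rcases eq_or_ne ((t : ℕ)) 0 with ht0 | ht0
      · have htt : t = ((0 : ℕ) : Fin (h + 1)) := by rw [← hc, ht0]
        rcases eq_or_ne h 1 with hone | hone
        · subst hone
          rw [if_pos ht0, htt]
          norm_num [Yaux]
        · have f1 : ¬((1 : ℕ) = h) := by omega
          have f2 : ¬((0 : ℕ) = h) := by omega
          have f3 : ¬((0 : ℕ) = h - 1) := by omega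
          rw [if_pos ht0, htt]
          simp only [if_neg f1, if_neg f2, if_neg f3, map_zero, add_zero]
          simp [Yaux]
      · rcases eq_or_ne ((t : ℕ)) h with hth | hth
        · have htt : t = ⟨h, hlt⟩ := Fin.ext hth
          rw [if_neg ht0, if_pos hth, if_pos rfl, if_pos rfl, htt]
          calc A h (Yaux h A h w + B (h - 1) u') + B h u
              = A h (Yaux h A h w) + (A h (B (h - 1) u') + B h u) := by
                rw [map_add]; abel
            _ = A h (Yaux h A h w) + (w ⟨h, hlt⟩ - A h (Yaux h A h w)) := by rw [hab]
            _ = w ⟨h, hlt⟩ := by abel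
        · rw [if_neg ht0, if_neg hth]
          rcases eq_or_ne ((t : ℕ) + 1) h with hlast | hlast
          · have hth1 : (t : ℕ) = h - 1 := by omega
            rw [if_pos hlast, if_neg hth, if_neg hth, if_pos hth1]
            have hY : Yaux h A h w
                = A (t : ℕ) (Yaux h A (t : ℕ) w) - w (((t : ℕ) : ℕ) : Fin (h + 1)) :=
              (congrArg (fun n : ℕ => Yaux h A n w) hlast).symm
            rw [hY, hc, ← hth1]
            abel
          · have hth2 : ¬((t : ℕ) = h - 1) := by omega
            rw [if_neg hlast, if_neg hth, if_neg hth, if_neg hth2]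
            have hY : Yaux h A ((t : ℕ) + 1) w
                = A (t : ℕ) (Yaux h A (t : ℕ) w) - w (((t : ℕ) : ℕ) : Fin (h + 1)) := rfl
            rw [hY, hc, map_zero, add_zero]
            abel
  rw [hkey]
  exact hclosed2.preimage ((continuous_apply _).sub ((A h).continuous.comp (Yaux_cont h A h)))
end

section
/- Let X and U be normed spaces, h ≥ 2, and for 0 ≤ t ≤ h let A_t : X → X and B_t : U → X be bounded linear operators. Define G : X^h × U^{h+1} → X^{h+1} by G((y_1,…,y_h),(v_0,…,v_h)) = (−y_1 + B_0 v_0, (−y_{t+1} + A_t y_t + B_t v_t)_{1≤t≤h−1}, A_h y_h + B_h v_h). If for every t with 2 ≤ t ≤ h the operator (y,v) ↦ A_t y + B_t v is surjective onto X, and Im(A_1 ∘ B_0) + Im B_1 = X, then G is surjective. -/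
theorem stmt4 {X U : Type*} [NormedAddCommGroup X] [NormedSpace ℝ X]
    [NormedAddCommGroup U] [NormedSpace ℝ U]
    (h : ℕ) (hh : 2 ≤ h) (A : ℕ → (X →L[ℝ] X)) (B : ℕ → (U →L[ℝ] X))
    (G : ((ℕ → X) × (ℕ → U)) → (Fin (h + 1) → X))
    (hG : ∀ y : ℕ → X, ∀ v : ℕ → U, ∀ t : Fin (h + 1),
      G (y, v) t =
        if (t : ℕ) = 0 then -(y 1) + B 0 (v 0)
        else if (t : ℕ) = h then A h (y h) + B h (v h)
        else -(y ((t : ℕ) + 1)) + A t (y t) + B t (v t))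
    (hsurj : ∀ t : ℕ, 2 ≤ t → t ≤ h → ∀ x : X, ∃ y : X, ∃ v : U, A t y + B t v = x)
    (h10 : ∀ x : X, ∃ v0 v1 : U, A 1 (B 0 v0) + B 1 v1 = x) :
    Function.Surjective G := by
  classical
  intro c
  -- c as a function on ℕ
  set cf : ℕ → X := fun t => if ht : t < h + 1 then c ⟨t, ht⟩ else 0 with hcf
  have cf_eq : ∀ t : Fin (h + 1), cf (t : ℕ) = c t := by
    intro t
    simp [hcf, t.isLt, Nat.not_lt.mpr (Nat.lt_succ_iff.mp t.isLt)]
  -- choice function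
  set pick : ℕ → X → X × U := fun t x =>
    if H : ∃ p : X × U, A t p.1 + B t p.2 = x then H.choose else 0 with hpickdef
  have pick_spec : ∀ t x, 2 ≤ t → t ≤ h →
      A t (pick t x).1 + B t (pick t x).2 = x := by
    intro t x ht2 hth
    have H : ∃ p : X × U, A t p.1 + B t p.2 = x := by
      obtain ⟨y, v, hyv⟩ := hsurj t ht2 hth x
      exact ⟨(y, v), hyv⟩
    simp only [hpickdef, dif_pos H]
    exact H.choose_spec
  -- backward recursion: s k = (y_{h-k}, v_{h-k})
  set s : ℕ → X × U := fun k =>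
    Nat.rec (pick h (cf h)) (fun k ih => pick (h - (k + 1)) (cf (h - (k + 1)) + ih.1)) k
    with hsdef
  have s_zero : s 0 = pick h (cf h) := rfl
  have s_succ : ∀ k, s (k + 1) = pick (h - (k + 1)) (cf (h - (k + 1)) + (s k).1) :=
    fun k => rfl
  -- key property of s
  have key : ∀ t, 2 ≤ t → t ≤ h →
      A t ((s (h - t)).1) + B t ((s (h - t)).2)
        = cf t + (if t = h then 0 else (s (h - (t + 1))).1) := by
    intro t ht2 hth
    rcases eq_or_lt_of_le hth with heq | hlt
    · subst heq
      rw [Nat.sub_self, s_zero, if_pos rfl, add_zero]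
      exact pick_spec t (cf t) ht2 le_rfl
    · have hk : h - t = (h - (t + 1)) + 1 := by omega
      have hkt : h - ((h - (t + 1)) + 1) = t := by omega
      rw [hk, s_succ, hkt, if_neg (by omega)]
      exact pick_spec t _ ht2 hth
  -- handle t = 0, 1 via h10
  obtain ⟨v0, v1, hv01⟩ := h10 (cf 1 + (s (h - 2)).1 + A 1 (cf 0))
  set y : ℕ → X := fun t => if t = 1 then B 0 v0 - cf 0 else (s (h - t)).1 with hydef
  set v : ℕ → U := fun t => if t = 0 then v0 else if t = 1 then v1 else (s (h - t)).2
    with hvdef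
  have hy_ne : ∀ n, n ≠ 1 → y n = (s (h - n)).1 := by
    intro n hn
    show (if n = 1 then B 0 v0 - cf 0 else (s (h - n)).1) = (s (h - n)).1
    rw [if_neg hn]
  have hy_one : y 1 = B 0 v0 - cf 0 := by
    show (if 1 = 1 then B 0 v0 - cf 0 else (s (h - 1)).1) = _
    rw [if_pos rfl]
  have hv_ne : ∀ n, n ≠ 0 → n ≠ 1 → v n = (s (h - n)).2 := by
    intro n h0 h1
    show (if n = 0 then v0 else if n = 1 then v1 else (s (h - n)).2) = (s (h - n)).2
    rw [if_neg h0, if_neg h1]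
  have hv_zero : v 0 = v0 := by
    show (if 0 = 0 then v0 else if 0 = 1 then v1 else (s (h - 0)).2) = v0
    rw [if_pos rfl]
  have hv_one : v 1 = v1 := by
    show (if 1 = 0 then v0 else if 1 = 1 then v1 else (s (h - 1)).2) = v1
    rw [if_neg one_ne_zero, if_pos rfl]
  refine ⟨(y, v), ?_⟩
  funext t
  rw [hG]
  have ht' : (t : ℕ) < h + 1 := t.isLt
  by_cases ht0 : (t : ℕ) = 0
  · rw [if_pos ht0, ← cf_eq t, ht0, hy_one, hv_zero]
    abel
  · rw [if_neg ht0]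
    by_cases hth : (t : ℕ) = h
    · rw [if_pos hth, ← cf_eq t, hth]
      rw [hy_ne h (by omega), hv_ne h (by omega) (by omega), Nat.sub_self, s_zero]
      exact pick_spec h (cf h) hh le_rfl
    · rw [if_neg hth, ← cf_eq t]
      by_cases ht1 : (t : ℕ) = 1
      · rw [ht1]
        rw [hy_ne 2 (by omega), hy_one, hv_one, map_sub]
        have := hv01
        linear_combination (norm := abel) this
      · -- 2 ≤ t ≤ h - 1
        have ht2 : 2 ≤ (t : ℕ) := by omega
        have hthle : (t : ℕ) ≤ h := by omega
        rw [hy_ne _ (by omega), hy_ne _ (by omega), hv_ne _ (by omega) (by omega)]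
        have hk := key (t : ℕ) ht2 hthle
        rw [if_neg hth] at hk
        linear_combination (norm := abel) hk
end

section
/- Let ((x̂_t),(û_t)) be an optimal process for one of the infinite-horizon problems P_1(σ), P_2(σ), or P_3(σ). Then for every h ≥ 1, the truncation (x̂_1,…,x̂_h, û_0,…,û_h) is an optimal solution of the finite-horizon problem F_h(σ): maximize Σ_{t=0}^h φ_t(x_t,u_t) over (x_t)_{1≤t≤h} ∈ Π X_t, (u_t)_{0≤t≤h} ∈ Π U_t subject to x_{t+1} = f_t(x_t,u_t) for 0 ≤ t ≤ h, with x_0 = σ and x_{h+1} = x̂_{h+1}. -/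
open Filter Finset

/-- Admissibility of an infinite-horizon process from initial state `σ`. -/
def IsAdmissible {X U : Type*} (Xs : ℕ → Set X) (Us : ℕ → Set U)
    (f : ℕ → X → U → X) (σ : X) (x : ℕ → X) (u : ℕ → U) : Prop :=
  x 0 = σ ∧ (∀ t, x t ∈ Xs t) ∧ (∀ t, u t ∈ Us t) ∧ ∀ t, x (t + 1) = f t (x t) (u t)

theorem stmt6 {X U : Type*} [NormedAddCommGroup X] [NormedSpace ℝ X] [CompleteSpace X]
    [NormedAddCommGroup U] [NormedSpace ℝ U] [CompleteSpace U]
    (Xs : ℕ → Set X) (Us : ℕ → Set U) (hX : ∀ t, IsOpen (Xs t))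
    (f : ℕ → X → U → X) (φ : ℕ → X → U → ℝ) (σ : X)
    (xh : ℕ → X) (uh : ℕ → U)
    (hadm : IsAdmissible Xs Us f σ xh uh)
    (hopt :
      -- optimality for P₁(σ)
      ((∃ l : ℝ, Tendsto (fun h => ∑ t ∈ range (h + 1), φ t (xh t) (uh t)) atTop (nhds l)) ∧
        ∀ x u, IsAdmissible Xs Us f σ x u →
          ∀ l lh : ℝ,
            Tendsto (fun h => ∑ t ∈ range (h + 1), φ t (x t) (u t)) atTop (nhds l) →
            Tendsto (fun h => ∑ t ∈ range (h + 1), φ t (xh t) (uh t)) atTop (nhds lh) →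
            l ≤ lh)
      -- optimality for P₂(σ)
      ∨ (∀ x u, IsAdmissible Xs Us f σ x u →
          (0 : EReal) ≤ Filter.limsup
            (fun h => ((∑ t ∈ range (h + 1),
              (φ t (xh t) (uh t) - φ t (x t) (u t)) : ℝ) : EReal)) atTop)
      -- optimality for P₃(σ)
      ∨ (∀ x u, IsAdmissible Xs Us f σ x u →
          (0 : EReal) ≤ Filter.liminf
            (fun h => ((∑ t ∈ range (h + 1),
              (φ t (xh t) (uh t) - φ t (x t) (u t)) : ℝ) : EReal)) atTop)) :
    ∀ h : ℕ, 1 ≤ h → ∀ x : ℕ → X, ∀ u : ℕ → U,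
      x 0 = σ →
      (∀ t, 1 ≤ t → t ≤ h → x t ∈ Xs t) →
      (∀ t, t ≤ h → u t ∈ Us t) →
      (∀ t, t ≤ h → x (t + 1) = f t (x t) (u t)) →
      x (h + 1) = xh (h + 1) →
      ∑ t ∈ range (h + 1), φ t (x t) (u t) ≤ ∑ t ∈ range (h + 1), φ t (xh t) (uh t) := by
  intro h hh x u hx0 hxmem humem hdyn hend
  -- splice the finite-horizon competitor with the optimal tail
  set y : ℕ → X := fun t => if t ≤ h then x t else xh t with hy
  set v : ℕ → U := fun t => if t ≤ h then u t else uh t with hv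
  have hadm' : IsAdmissible Xs Us f σ y v := by
    obtain ⟨h0, hXm, hUm, hdy⟩ := hadm
    refine ⟨by simp [hy, hx0], ?_, ?_, ?_⟩
    · intro t
      by_cases ht : t ≤ h
      · rcases Nat.eq_zero_or_pos t with rfl | hpos
        · simpa [hy, hx0, ← h0] using hXm 0
        · simpa [hy, ht] using hxmem t hpos ht
      · simpa [hy, ht] using hXm t
    · intro t
      by_cases ht : t ≤ h
      · simpa [hv, ht] using humem t ht
      · simpa [hv, ht] using hUm t
    · intro t
      rcases lt_trichotomy t h with htl | rfl | htg
      · have h1 : t + 1 ≤ h := htl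
        simp only [hy, hv, if_pos h1, if_pos htl.le]
        exact hdyn t htl.le
      · have h1 : ¬ (t + 1 ≤ t) := by omega
        simp only [hy, hv, if_pos le_rfl, if_neg h1]
        rw [← hend]
        exact hdyn t le_rfl
      · have h1 : ¬ (t + 1 ≤ h) := by omega
        have h2 : ¬ (t ≤ h) := by omega
        simp only [hy, hv, if_neg h1, if_neg h2]
        exact hdy t
  set C : ℝ := ∑ t ∈ range (h + 1), (φ t (xh t) (uh t) - φ t (x t) (u t)) with hC
  have key : ∀ m, h ≤ m →
      ∑ t ∈ range (m + 1), (φ t (xh t) (uh t) - φ t (y t) (v t)) = C := by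
    intro m hm
    rw [← Finset.sum_range_add_sum_Ico _ (by omega : h + 1 ≤ m + 1)]
    have h1 : ∑ t ∈ Finset.Ico (h + 1) (m + 1),
        (φ t (xh t) (uh t) - φ t (y t) (v t)) = 0 := by
      apply Finset.sum_eq_zero
      intro t ht
      have : ¬ (t ≤ h) := by simp at ht; omega
      simp [hy, hv, this]
    have h2 : ∑ t ∈ range (h + 1), (φ t (xh t) (uh t) - φ t (y t) (v t)) = C := by
      apply Finset.sum_congr rfl
      intro t ht
      have : t ≤ h := by simp at ht; omega
      simp [hy, hv, this]
    rw [h1, h2, add_zero]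
  have hkey' : ∀ᶠ m in atTop,
      ((∑ t ∈ range (m + 1), (φ t (xh t) (uh t) - φ t (y t) (v t)) : ℝ) : EReal)
        = ((C : ℝ) : EReal) := by
    filter_upwards [eventually_ge_atTop h] with m hm
    exact congrArg (fun r : ℝ => (r : EReal)) (key m hm)
  have goal_of : 0 ≤ C → ∑ t ∈ range (h + 1), φ t (x t) (u t) ≤
      ∑ t ∈ range (h + 1), φ t (xh t) (uh t) := by
    intro hCpos
    have := Finset.sum_sub_distrib (f := fun t => φ t (xh t) (uh t))
      (g := fun t => φ t (x t) (u t)) (s := range (h + 1))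
    rw [hC, this] at hCpos
    linarith
  rcases hopt with ⟨⟨lh, hlh⟩, hmax⟩ | h2 | h3
  · apply goal_of
    have hten : Tendsto (fun m => ∑ t ∈ range (m + 1), φ t (y t) (v t)) atTop
        (nhds (lh - C)) := by
      apply Tendsto.congr' _ (hlh.sub_const C)
      filter_upwards [eventually_ge_atTop h] with m hm
      have := key m hm
      rw [Finset.sum_sub_distrib] at this
      linarith
    have := hmax y v hadm' (lh - C) lh hten hlh
    linarith
  · have hlim := h2 y v hadm'
    have : Filter.limsup
        (fun m => ((∑ t ∈ range (m + 1),
          (φ t (xh t) (uh t) - φ t (y t) (v t)) : ℝ) : EReal)) atTop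
        = ((C : ℝ) : EReal) := by
      rw [Filter.limsup_congr hkey']
      exact Filter.limsup_const _
    rw [this] at hlim
    exact goal_of (by exact_mod_cast hlim)
  · have hlim := h3 y v hadm'
    have : Filter.liminf
        (fun m => ((∑ t ∈ range (m + 1),
          (φ t (xh t) (uh t) - φ t (y t) (v t)) : ℝ) : EReal)) atTop
        = ((C : ℝ) : EReal) := by
      rw [Filter.liminf_congr hkey']
      exact Filter.liminf_const _
    rw [this] at hlim
    exact goal_of (by exact_mod_cast hlim)
end
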